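/- Let G be a group generated by κ and α acting on a poset P by order-preserving bijections, with elements β, μ satisfying α²βα²β²α⁻¹β² = 1, μ = α⁻¹β⁻², μ = κ^q and κ^{p−18q} = α⁻²βα⁻¹ where q > 0 and p − 18q > 0. If x ∈ P satisfies xα = x and x < xκ, then a contradiction follows; hence any point fixed by α and comparable to its κ-image is fixed by κ. -/

import Mathlib

/-- Lemma "poset", second case: with `q > 0` and `p − 18q > 0`, if `xα = x`
and `x < xκ` then a contradiction follows. -/
theorem poset_lemma_fixed_by_alpha {P : Type*} [PartialOrder P]
    (κ α β μ : P ≃o P) (p q : ℤ) (hq : 0 < q) (hpq : 0 < p - 18 * q)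
    -- the relation α²βα²β²α⁻¹β² = 1, read as a right action
    (hrel : ∀ x : P, β (β (α.symm (β (β (α (α (β (α (α x))))))))) = x)
    -- μ = α⁻¹β⁻²
    (hμ : ∀ x : P, μ x = β.symm (β.symm (α.symm x)))
    -- μ = κ^q
    (hμκ : ∀ x : P, μ x = (κ ^ q) x)
    -- κ^{p-18q} = α⁻²βα⁻¹
    (hκ : ∀ x : P, (κ ^ (p - 18 * q)) x = α.symm (β (α.symm (α.symm x))))
    (x : P) (hxα : α x = x) (hxκ : x < κ x) :
    False := by
  have hαs : α.symm x = x := by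
    conv_lhs => rw [← hxα]
    exact α.symm_apply_apply x
  -- positive powers of κ move x strictly upward
  have key : ∀ n : ℤ, 0 < n → x < (κ ^ n) x := by
    have : ∀ n : ℤ, 1 ≤ n → x < (κ ^ n) x := by
      intro n hn
      refine Int.le_induction (motive := fun k _ => x < (κ ^ k) x) ?_ ?_ n hn
      · simpa using hxκ
      · intro m _ ih
        rw [zpow_add_one]
        show x < (κ ^ m) (κ x)
        exact lt_trans ih ((κ ^ m).strictMono hxκ)
    exact fun n hn => this n hn
  have h1 : x < (κ ^ q) x := key q hq
  -- β² x < x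
  have hβ2 : β (β x) < x := by
    have hx' : x < β.symm (β.symm x) := by
      have := hμ x
      rw [hαs, hμκ] at this
      rw [← this]; exact h1
    have := β.strictMono (β.strictMono hx')
    simpa using this
  -- κ^{p-18q} x = α⁻¹(β x)
  have hκx : (κ ^ (p - 18 * q)) x = α.symm (β x) := by
    rw [hκ, hαs, hαs]
  -- y = κ^{p-17q} x > x
  set y := (κ ^ q) ((κ ^ (p - 18 * q)) x) with hy
  have hy_gt : x < y := by
    have h : (κ ^ q) ((κ ^ (p - 18 * q)) x) = (κ ^ (q + (p - 18 * q))) x := by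
      rw [zpow_add]; rfl
    rw [hy, h]
    exact key _ (by omega)
  -- compute y via the relations
  have hy_eq : y = β.symm (β.symm (α.symm (α.symm (β x)))) := by
    rw [hy, hκx, ← hμκ, hμ]
  have hrel' : β (β (α.symm (β (β (α (α (β (β x)))))))) = α.symm (α.symm (β x)) := by
    have h := hrel (α.symm (α.symm (β x)))
    simpa using h
  have hy2 : y = α.symm (β (β (α (α (β (β x)))))) := by
    rw [hy_eq, ← hrel']
    simp
  -- chain of inequalities: y < x
  have s2 : α (α (β (β x))) < x := by
    calc α (α (β (β x))) < α (α x) := α.strictMono (α.strictMono hβ2)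
    _ = x := by rw [hxα, hxα]
  have s3 : β (β (α (α (β (β x))))) < x :=
    lt_trans (β.strictMono (β.strictMono s2)) hβ2
  have s4 : α.symm (β (β (α (α (β (β x)))))) < x := by
    have := α.symm.strictMono s3
    rwa [hαs] at this
  rw [hy2] at hy_gt
  exact absurd hy_gt s4.asymm
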